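/- Let p be a prime and let Y(q) ∈ Z_p[[q]] be a formal power series written as Y(q) = Σ_{d≥1} n_d d^3 q^d/(1-q^d) with n_d ∈ Q_p. Then all n_d ∈ Z_p if and only if there exists ψ(q) ∈ Z_p[[q]] with Y(q) - Y(q^p) = δ^3(ψ(q)), where δ = q d/dq. -/

import Mathlib

open PowerSeries

/-- The derivation `δ = q d/dq` on formal power series: the `m`-th coefficient of `δ f`
is `m` times the `m`-th coefficient of `f`. -/
noncomputable def seriesDelta {R : Type*} [CommRing R] (f : PowerSeries R) : PowerSeries R :=
  PowerSeries.mk fun m => (m : R) * PowerSeries.coeff m f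

/-- Substitution `q ↦ q^p` on formal power series: the `m`-th coefficient of `f(q^p)`
is the `m/p`-th coefficient of `f` if `p ∣ m`, and `0` otherwise. -/
noncomputable def seriesSub {R : Type*} [CommRing R] (p : ℕ) (f : PowerSeries R) : PowerSeries R :=
  PowerSeries.mk fun m => if p ∣ m then PowerSeries.coeff (m / p) f else 0

open Finset in
lemma norm_eq_of_dvd {p : ℕ} [Fact p.Prime] {d m : ℕ} (hm : m ≠ 0) (hdm : d ∣ m)
    (hnd : ¬ (p * d ∣ m)) : ‖(d : ℚ_[p])‖ = ‖(m : ℚ_[p])‖ := by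
  obtain ⟨k, hk⟩ := hdm
  have hpk : ¬ (p : ℤ) ∣ (k : ℤ) := by
    intro h
    rw [Int.natCast_dvd_natCast] at h
    exact hnd (by obtain ⟨t, ht⟩ := h; exact ⟨t, by rw [hk, ht]; ring⟩)
  have h1 : ‖(k : ℚ_[p])‖ = 1 := by
    have := (Padic.norm_intCast_lt_one_iff (p := p) (k := (k : ℤ))).not
    push_cast at this
    have h2 := this.mpr hpk
    have h3 : ‖(k : ℚ_[p])‖ ≤ 1 := Padic.norm_int_le_one _
    push_cast at h3
    linarith [lt_or_eq_of_le h3]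
  rw [hk]
  push_cast
  rw [norm_mul, h1, mul_one]



/-- Lemma KSV: for `Y(q) ∈ ℤ_p[[q]]` written as `Y(q) = Σ_{d≥1} n_d d³ q^d/(1-q^d)` with
`n_d ∈ ℚ_p`, all `n_d` lie in `ℤ_p` iff `Y(q) - Y(q^p) = δ³(ψ)` for some `ψ ∈ ℤ_p[[q]]`. -/
theorem stmt0 (p : ℕ) [Fact p.Prime] (n : ℕ → ℚ_[p]) (Y : PowerSeries ℚ_[p])
    (hint : ∀ m : ℕ, ‖PowerSeries.coeff m Y‖ ≤ 1)
    (hY0 : PowerSeries.constantCoeff Y = 0)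
    (hY : ∀ m : ℕ, 1 ≤ m →
      PowerSeries.coeff m Y = ∑ d ∈ m.divisors, n d * (d : ℚ_[p]) ^ 3) :
    (∀ d : ℕ, 1 ≤ d → ‖n d‖ ≤ 1) ↔
      ∃ ψ : PowerSeries ℚ_[p], (∀ m : ℕ, ‖PowerSeries.coeff m ψ‖ ≤ 1) ∧
        Y - seriesSub p Y = seriesDelta (seriesDelta (seriesDelta ψ)) := by
  have hp : p.Prime := Fact.out
  set Z := Y - seriesSub p Y with hZ
  -- coefficient of Z at 0
  have hZ0 : PowerSeries.coeff 0 Z = 0 := by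
    simp [hZ, seriesSub, PowerSeries.coeff_mk, Nat.zero_div, dvd_zero,
      ← PowerSeries.coeff_zero_eq_constantCoeff, hY0]
  -- key formula for coefficients of Z
  have hkey : ∀ m : ℕ, 1 ≤ m → PowerSeries.coeff m Z =
      ∑ d ∈ m.divisors.filter (fun d => ¬ (p * d ∣ m)), n d * (d : ℚ_[p]) ^ 3 := by
    intro m hm
    have hm0 : m ≠ 0 := by omega
    rw [hZ, map_sub]
    simp only [seriesSub, PowerSeries.coeff_mk]
    by_cases hpm : p ∣ m
    · have hmp1 : 1 ≤ m / p := Nat.one_le_div_iff hp.pos |>.mpr (Nat.le_of_dvd (by omega) hpm)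
      rw [if_pos hpm, hY m hm, hY _ hmp1]
      have hdiv : (m / p).divisors = m.divisors.filter (fun d => p * d ∣ m) := by
        ext d
        simp only [Nat.mem_divisors, Finset.mem_filter]
        constructor
        · rintro ⟨hd, _⟩
          have h2 : p * d ∣ m := (Nat.dvd_div_iff_mul_dvd hpm).mp hd
          exact ⟨⟨(dvd_mul_left d p).trans h2, hm0⟩, h2⟩
        · rintro ⟨⟨_, _⟩, h2⟩
          refine ⟨(Nat.dvd_div_iff_mul_dvd hpm).mpr h2, ?_⟩
          exact Nat.div_ne_zero_iff_of_dvd hpm |>.mpr ⟨hm0, hp.ne_zero⟩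
      rw [hdiv, sub_eq_iff_eq_add', ← Finset.sum_filter_add_sum_filter_not m.divisors (fun d => p * d ∣ m)]
    · rw [if_neg hpm, sub_zero, hY m hm]
      congr 1
      rw [Finset.filter_true_of_mem]
      intro d hd
      intro h
      exact hpm ((dvd_mul_right p d).trans h)
  -- condition C
  have hC_iff : (∀ d : ℕ, 1 ≤ d → ‖n d‖ ≤ 1) ↔
      (∀ m : ℕ, 1 ≤ m → ‖PowerSeries.coeff m Z‖ ≤ ‖(m : ℚ_[p])‖ ^ 3) := by
    constructor
    · intro hn m hm
      rw [hkey m hm]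
      apply IsUltrametricDist.norm_sum_le_of_forall_le_of_nonneg (by positivity)
      intro d hd
      rw [Finset.mem_filter, Nat.mem_divisors] at hd
      obtain ⟨⟨hdm, hm0⟩, hnd⟩ := hd
      have hd1 : 1 ≤ d := Nat.pos_of_dvd_of_pos hdm (by omega)
      rw [norm_mul, norm_pow, norm_eq_of_dvd hm0 hdm hnd]
      calc ‖n d‖ * ‖(m : ℚ_[p])‖ ^ 3 ≤ 1 * ‖(m : ℚ_[p])‖ ^ 3 := by
            gcongr; exact hn d hd1
        _ = ‖(m : ℚ_[p])‖ ^ 3 := one_mul _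
    · intro hc d
      induction d using Nat.strong_induction_on with
      | _ d ih =>
        intro hd1
        have hd0 : d ≠ 0 := by omega
        have hdc : (d : ℚ_[p]) ≠ 0 := Nat.cast_ne_zero.mpr hd0
        have hdmem : d ∈ d.divisors.filter (fun e => ¬ (p * e ∣ d)) := by
          rw [Finset.mem_filter, Nat.mem_divisors]
          refine ⟨⟨dvd_refl d, hd0⟩, fun h => ?_⟩
          have := Nat.le_of_dvd (by omega) h
          nlinarith [hp.two_le]
        have hsum := hkey d hd1
        rw [← Finset.add_sum_erase _ _ hdmem] at hsum
        have heq : n d * (d : ℚ_[p]) ^ 3 = PowerSeries.coeff d Z -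
            ∑ e ∈ (d.divisors.filter (fun e => ¬ (p * e ∣ d))).erase d,
              n e * (e : ℚ_[p]) ^ 3 := by
          rw [hsum]; ring
        have hb : ‖n d * (d : ℚ_[p]) ^ 3‖ ≤ ‖(d : ℚ_[p])‖ ^ 3 := by
          rw [heq, sub_eq_add_neg]
          apply le_trans (Padic.nonarchimedean _ _)
          rw [norm_neg]
          apply max_le (hc d hd1)
          apply IsUltrametricDist.norm_sum_le_of_forall_le_of_nonneg (by positivity)
          intro e he
          rw [Finset.mem_erase, Finset.mem_filter, Nat.mem_divisors] at he
          obtain ⟨hne, ⟨hed, -⟩, hnd⟩ := he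
          have he1 : 1 ≤ e := Nat.pos_of_dvd_of_pos hed (by omega)
          have helt : e < d := lt_of_le_of_ne (Nat.le_of_dvd (by omega) hed) hne
          rw [norm_mul, norm_pow, norm_eq_of_dvd hd0 hed hnd]
          calc ‖n e‖ * ‖(d : ℚ_[p])‖ ^ 3 ≤ 1 * ‖(d : ℚ_[p])‖ ^ 3 := by
                gcongr; exact ih e helt he1
            _ = ‖(d : ℚ_[p])‖ ^ 3 := one_mul _
        rw [norm_mul, norm_pow] at hb
        have hpos : (0:ℝ) < ‖(d : ℚ_[p])‖ ^ 3 := pow_pos (norm_pos_iff.mpr hdc) 3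
        nlinarith
  rw [hC_iff]
  constructor
  · intro hc
    refine ⟨PowerSeries.mk fun m => ((m : ℚ_[p]) ^ 3)⁻¹ * PowerSeries.coeff m Z, ?_, ?_⟩
    · intro m
      rcases Nat.eq_zero_or_pos m with hm | hm
      · simp [hm]
      · rw [PowerSeries.coeff_mk, norm_mul, norm_inv, norm_pow]
        have hmc : (m : ℚ_[p]) ≠ 0 := Nat.cast_ne_zero.mpr (by omega)
        have hnorm : (0:ℝ) < ‖(m : ℚ_[p])‖ ^ 3 := pow_pos (norm_pos_iff.mpr hmc) 3
        rw [inv_mul_le_iff₀ hnorm, mul_one]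
        exact hc m hm
    · ext m
      simp only [seriesDelta, PowerSeries.coeff_mk]
      rcases Nat.eq_zero_or_pos m with hm | hm
      · simp [hm, hZ0]
      · have hmc : (m : ℚ_[p]) ≠ 0 := Nat.cast_ne_zero.mpr (by omega)
        field_simp
  · rintro ⟨ψ, hψ, hψeq⟩ m hm
    have : PowerSeries.coeff m Z =
        (m : ℚ_[p]) ^ 3 * PowerSeries.coeff m ψ := by
      rw [hψeq]
      simp only [seriesDelta, PowerSeries.coeff_mk]
      ring
    rw [this, norm_mul, norm_pow]
    calc ‖(m : ℚ_[p])‖ ^ 3 * ‖PowerSeries.coeff m ψ‖ ≤ ‖(m : ℚ_[p])‖ ^ 3 * 1 := by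
          gcongr; exact hψ m
      _ = ‖(m : ℚ_[p])‖ ^ 3 := mul_one _
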